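/- Let Δ₆ ⊂ ℝ² be the convex hull of (0,0), (6,0), (6,3), (9/2,9/2) and let P₆(x,y) = 4·x⁵·y⁵·(x+y)²·(x−y)². Then (∫_{Δ₆} x·P₆ dxdy)/(∫_{Δ₆} P₆ dxdy) = 421619272419/78063549568 and (∫_{Δ₆} y·P₆ dxdy)/(∫_{Δ₆} P₆ dxdy) = 226450079005/78063549568; in particular the first quantity is greater than 5 and the sum of the two quantities is greater than 8. -/

import Mathlib

open MeasureTheory Set

noncomputable section

/-- The polytope as an intersection of half-planes. -/
def S6 : Set (ℝ × ℝ) := {p | 0 ≤ p.2 ∧ p.2 ≤ p.1 ∧ p.1 ≤ 6 ∧ p.1 + p.2 ≤ 9}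

lemma measurableSet_S6 : MeasurableSet S6 := by
  have : S6 = {p : ℝ × ℝ | 0 ≤ p.2} ∩ ({p | p.2 ≤ p.1} ∩ ({p | p.1 ≤ 6} ∩ {p | p.1 + p.2 ≤ 9})) := rfl
  rw [this]
  exact (measurableSet_le measurable_const measurable_snd).inter
    ((measurableSet_le measurable_snd measurable_fst).inter
      ((measurableSet_le measurable_fst measurable_const).inter
        (measurableSet_le (measurable_fst.add measurable_snd) measurable_const)))

lemma combo3 {M : Set (ℝ × ℝ)} {A B C : ℝ × ℝ} (hA : A ∈ convexHull ℝ M)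
    (hB : B ∈ convexHull ℝ M) (hC : C ∈ convexHull ℝ M) {a b c : ℝ}
    (ha : 0 ≤ a) (hb : 0 ≤ b) (hc : 0 ≤ c) (habc : a + b + c = 1) :
    a • A + b • B + c • C ∈ convexHull ℝ M := by
  have h := (convex_convexHull ℝ M).sum_mem (t := (Finset.univ : Finset (Fin 3)))
    (w := ![a, b, c]) (z := ![A, B, C]) ?_ ?_ ?_
  · simpa [Fin.sum_univ_three, add_assoc] using h
  · intro i _; fin_cases i <;> simpa using ‹_›
  · simp [Fin.sum_univ_three, habc]
  · intro i _; fin_cases i <;> simpa using ‹_›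

lemma convexHull_eq_S6 :
    convexHull ℝ {((0 : ℝ), (0 : ℝ)), (6, 0), (6, 3), ((9 : ℝ) / 2, (9 : ℝ) / 2)} = S6 := by
  apply le_antisymm
  · apply convexHull_min
    · rintro p hp
      simp only [Set.mem_insert_iff, Set.mem_singleton_iff] at hp
      rcases hp with h | h | h | h <;> subst h <;>
        exact ⟨by norm_num, by norm_num, by norm_num, by norm_num⟩
    · have l1 : Convex ℝ {p : ℝ × ℝ | 0 ≤ p.2} :=
        convex_halfSpace_ge ⟨fun a b => rfl, fun c a => rfl⟩ 0
      have l2 : Convex ℝ {p : ℝ × ℝ | p.2 ≤ p.1} := by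
        have h := convex_halfSpace_ge
          (⟨fun a b => by simp [Prod.fst_add, Prod.snd_add]; ring,
            fun c a => by simp [Prod.smul_fst, Prod.smul_snd, smul_eq_mul]; ring⟩ :
            IsLinearMap ℝ (fun p : ℝ × ℝ => p.1 - p.2)) 0
        rw [show {p : ℝ × ℝ | p.2 ≤ p.1} = {w | 0 ≤ w.1 - w.2} by ext p; simp [sub_nonneg]]
        exact h
      have l3 : Convex ℝ {p : ℝ × ℝ | p.1 ≤ 6} :=
        convex_halfSpace_le ⟨fun a b => rfl, fun c a => rfl⟩ 6
      have l4 : Convex ℝ {p : ℝ × ℝ | p.1 + p.2 ≤ 9} :=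
        convex_halfSpace_le
          (⟨fun a b => by simp [Prod.fst_add, Prod.snd_add]; ring,
            fun c a => by simp [Prod.smul_fst, Prod.smul_snd, smul_eq_mul]; ring⟩ :
            IsLinearMap ℝ (fun p : ℝ × ℝ => p.1 + p.2)) 9
      have : S6 = {p : ℝ × ℝ | 0 ≤ p.2} ∩ ({p | p.2 ≤ p.1} ∩
          ({p | p.1 ≤ 6} ∩ {p | p.1 + p.2 ≤ 9})) := rfl
      rw [this]
      exact l1.inter (l2.inter (l3.inter l4))
  · rintro ⟨x, y⟩ ⟨h0, hyx, hx6, hxy⟩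
    set M : Set (ℝ × ℝ) := {((0 : ℝ), (0 : ℝ)), (6, 0), (6, 3), ((9 : ℝ) / 2, (9 : ℝ) / 2)}
    have hA : ((0 : ℝ), (0 : ℝ)) ∈ convexHull ℝ M := subset_convexHull ℝ M (by simp [M])
    have hB : ((6 : ℝ), (0 : ℝ)) ∈ convexHull ℝ M := subset_convexHull ℝ M (by simp [M])
    have hC : ((6 : ℝ), (3 : ℝ)) ∈ convexHull ℝ M := subset_convexHull ℝ M (by simp [M])
    have hD : ((9 / 2 : ℝ), (9 / 2 : ℝ)) ∈ convexHull ℝ M := subset_convexHull ℝ M (by simp [M])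
    by_cases hcase : 2 * y ≤ x
    · have hp : ((x, y) : ℝ × ℝ) = (1 - x / 6) • ((0 : ℝ), (0 : ℝ))
          + (x / 6 - y / 3) • ((6 : ℝ), (0 : ℝ)) + (y / 3) • ((6 : ℝ), (3 : ℝ)) := by
        simp only [Prod.smul_mk, smul_eq_mul, Prod.mk_add_mk, Prod.mk.injEq]
        constructor <;> ring
      rw [hp]
      exact combo3 hA hB hC (by linarith) (by linarith) (by linarith) (by ring)
    · have hp : ((x, y) : ℝ × ℝ) = (1 - (x + y) / 9) • ((0 : ℝ), (0 : ℝ))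
          + ((x - y) / 3) • ((6 : ℝ), (3 : ℝ)) + ((2 * y - x) * 2 / 9) • ((9 / 2 : ℝ), (9 / 2 : ℝ)) := by
        simp only [Prod.smul_mk, smul_eq_mul, Prod.mk_add_mk, Prod.mk.injEq]
        constructor <;> ring
      rw [hp]
      exact combo3 hA hC hD (by linarith) (by linarith) (by linarith) (by ring)

lemma il_integrable (a b : ℝ) (l : List (ℝ × ℕ)) :
    IntervalIntegrable (fun x => (l.map (fun ci => ci.1 * x ^ ci.2)).sum) volume a b := by
  induction l with
  | nil => simpa using intervalIntegrable_const (μ := volume) (a := a) (b := b) (c := (0:ℝ))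
  | cons h t ih =>
      simpa using ((continuous_const.mul (continuous_pow h.2)).intervalIntegrable a b).add ih

lemma il_eval (a b : ℝ) (l : List (ℝ × ℕ)) :
    (∫ x in a..b, (l.map (fun ci => ci.1 * x ^ ci.2)).sum)
      = (l.map (fun ci => ci.1 * (b ^ (ci.2 + 1) - a ^ (ci.2 + 1)) / (ci.2 + 1))).sum := by
  induction l with
  | nil => simp
  | cons h t ih =>
      simp only [List.map_cons, List.sum_cons]
      rw [intervalIntegral.integral_add (f := fun x => h.1 * x ^ h.2)
          ((continuous_const.mul (continuous_pow h.2)).intervalIntegrable a b)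
          (il_integrable a b t), ih, intervalIntegral.integral_const_mul,
          integral_pow, mul_div_assoc]

/-- Fubini for the region `S6`. -/
lemma setIntegral_S6 (f : ℝ × ℝ → ℝ) (hf : Continuous f) (g : ℝ → ℝ) (hg : Continuous g)
    (hgf : ∀ x ∈ Icc (0:ℝ) 6, g x = ∫ y in (0:ℝ)..(min x (9 - x)), f (x, y)) :
    ∫ p in S6, f p = (∫ x in (0:ℝ)..(9/2 : ℝ), g x) + ∫ x in (9/2 : ℝ)..(6:ℝ), g x := by
  have hS := measurableSet_S6
  have hsub : S6 ⊆ Icc ((0:ℝ), (0:ℝ)) ((6:ℝ), (6:ℝ)) := by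
    rintro ⟨x, y⟩ ⟨h1, h2, h3, h4⟩
    simp only [Set.mem_Icc, Prod.mk_le_mk]
    refine ⟨⟨by linarith, h1⟩, h3, by linarith⟩
  have hIntOn : IntegrableOn f S6 volume :=
    (hf.continuousOn.integrableOn_compact isCompact_Icc).mono_set hsub
  have hInt : Integrable (S6.indicator f) volume := hIntOn.integrable_indicator hS
  rw [← integral_indicator hS]
  rw [Measure.volume_eq_prod] at hInt ⊢
  rw [MeasureTheory.integral_prod _ hInt]
  have h1 : ∀ x : ℝ, (∫ y, S6.indicator f (x, y)) = (Icc (0:ℝ) 6).indicator g x := by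
    intro x
    by_cases hx : x ∈ Icc (0:ℝ) 6
    · obtain ⟨hx0, hx6⟩ := hx
      have hm : (0:ℝ) ≤ min x (9 - x) := le_min hx0 (by linarith)
      have hfun : (fun y => S6.indicator f (x, y))
          = (Icc (0:ℝ) (min x (9 - x))).indicator (fun y => f (x, y)) := by
        funext y
        have hmem : ((x, y) ∈ S6) ↔ y ∈ Icc (0:ℝ) (min x (9 - x)) := by
          simp only [S6, Set.mem_setOf_eq, Set.mem_Icc, le_min_iff]
          constructor
          · rintro ⟨a1, a2, a3, a4⟩; exact ⟨a1, a2, by linarith⟩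
          · rintro ⟨a1, a2, a3⟩; exact ⟨a1, a2, hx6, by linarith⟩
        by_cases h : (x, y) ∈ S6
        · rw [Set.indicator_of_mem h, Set.indicator_of_mem (hmem.mp h)]
        · rw [Set.indicator_of_notMem h, Set.indicator_of_notMem (fun hc => h (hmem.mpr hc))]
      rw [hfun, integral_indicator measurableSet_Icc, integral_Icc_eq_integral_Ioc,
        ← intervalIntegral.integral_of_le hm, ← hgf x (Set.mem_Icc.mpr ⟨hx0, hx6⟩),
        Set.indicator_of_mem (Set.mem_Icc.mpr ⟨hx0, hx6⟩)]
    · rw [Set.indicator_of_notMem hx]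
      have : ∀ y : ℝ, S6.indicator f (x, y) = 0 := by
        intro y
        apply Set.indicator_of_notMem
        rintro ⟨h1, h2, h3, h4⟩
        simp only [Set.mem_Icc, not_and_or, not_le] at hx
        rcases hx with hx | hx
        · exact absurd (le_trans h1 h2) (not_le.mpr hx)
        · exact absurd h3 (not_le.mpr hx)
      simp only [this, integral_zero]
  simp only [h1]
  rw [integral_indicator measurableSet_Icc, integral_Icc_eq_integral_Ioc,
    ← intervalIntegral.integral_of_le (by norm_num : (0:ℝ) ≤ 6),
    ← intervalIntegral.integral_add_adjacent_intervals
      (hg.intervalIntegrable 0 (9/2)) (hg.intervalIntegrable (9/2) 6)]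

lemma int_P :
    ∫ p in S6, (4 * p.1 ^ 5 * p.2 ^ 5 * (p.1 + p.2) ^ 2 * (p.1 - p.2) ^ 2) = (514764068401251/160160 : ℝ) := by
  have hmin : Continuous (fun x : ℝ => min x (9 - x)) :=
    continuous_id.min (continuous_const.sub continuous_id)
  set g : ℝ → ℝ := fun x => 4 * x ^ 9 * (min x (9 - x)) ^ 6 / 6 - 8 * x ^ 7 * (min x (9 - x)) ^ 8 / 8 + 4 * x ^ 5 * (min x (9 - x)) ^ 10 / 10 with hg_def
  have hgc : Continuous g := by
    apply Continuous.add
    apply Continuous.sub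
    all_goals fun_prop
  have hfc : Continuous (fun p : ℝ × ℝ => 4 * p.1 ^ 5 * p.2 ^ 5 * (p.1 + p.2) ^ 2 * (p.1 - p.2) ^ 2) := by fun_prop
  rw [setIntegral_S6 _ hfc g hgc ?_]
  · have e1 : EqOn g (fun x => (([((1:ℝ)/15, 15)] : List (ℝ × ℕ)).map
        (fun ci => ci.1 * x ^ ci.2)).sum) (Set.uIcc (0:ℝ) (9/2)) := by
      intro x hx
      rw [Set.uIcc_of_le (by norm_num : (0:ℝ) ≤ 9/2), Set.mem_Icc] at hx
      have hm : min x (9 - x) = x := min_eq_left (by linarith [hx.1, hx.2])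
      simp only [hg_def, hm, List.map_cons, List.map_nil, List.sum_cons, List.sum_nil]
      ring
    have e2 : EqOn g (fun x => (([((6973568802:ℝ)/5, 5), (-1549681956, 6), (731794257, 7), (-191318760, 8), (30114990, 9), (-14407956/5, 10), (157464, 11), (-3888, 12), (1/15, 15)] : List (ℝ × ℕ)).map
        (fun ci => ci.1 * x ^ ci.2)).sum) (Set.uIcc ((9:ℝ)/2) 6) := by
      intro x hx
      rw [Set.uIcc_of_le (by norm_num : (9:ℝ)/2 ≤ 6), Set.mem_Icc] at hx
      have hm : min x (9 - x) = 9 - x := min_eq_right (by linarith [hx.1, hx.2])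
      simp only [hg_def, hm, List.map_cons, List.map_nil, List.sum_cons, List.sum_nil]
      ring
    rw [intervalIntegral.integral_congr e1, intervalIntegral.integral_congr e2,
      il_eval, il_eval]
    norm_num
  · intro x _
    have h : EqOn (fun y => (fun p : ℝ × ℝ => 4 * p.1 ^ 5 * p.2 ^ 5 * (p.1 + p.2) ^ 2 * (p.1 - p.2) ^ 2) (x, y))
        (fun y => (([(4 * x ^ 9, 5), (-8 * x ^ 7, 7), (4 * x ^ 5, 9)] : List (ℝ × ℕ)).map (fun ci => ci.1 * y ^ ci.2)).sum)
        (Set.uIcc (0:ℝ) (min x (9 - x))) := by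
      intro y _
      simp only [List.map_cons, List.map_nil, List.sum_cons, List.sum_nil]
      ring
    rw [intervalIntegral.integral_congr h, il_eval]
    simp only [hg_def, List.map_cons, List.map_nil, List.sum_cons, List.sum_nil]
    norm_num
    ring

lemma int_xP :
    ∫ p in S6, (p.1 * (4 * p.1 ^ 5 * p.2 ^ 5 * (p.1 + p.2) ^ 2 * (p.1 - p.2) ^ 2)) = (6049775729347896033/348508160 : ℝ) := by
  have hmin : Continuous (fun x : ℝ => min x (9 - x)) :=
    continuous_id.min (continuous_const.sub continuous_id)
  set g : ℝ → ℝ := fun x => 4 * x ^ 10 * (min x (9 - x)) ^ 6 / 6 - 8 * x ^ 8 * (min x (9 - x)) ^ 8 / 8 + 4 * x ^ 6 * (min x (9 - x)) ^ 10 / 10 with hg_def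
  have hgc : Continuous g := by
    apply Continuous.add
    apply Continuous.sub
    all_goals fun_prop
  have hfc : Continuous (fun p : ℝ × ℝ => p.1 * (4 * p.1 ^ 5 * p.2 ^ 5 * (p.1 + p.2) ^ 2 * (p.1 - p.2) ^ 2)) := by fun_prop
  rw [setIntegral_S6 _ hfc g hgc ?_]
  · have e1 : EqOn g (fun x => (([((1:ℝ)/15, 16)] : List (ℝ × ℕ)).map
        (fun ci => ci.1 * x ^ ci.2)).sum) (Set.uIcc (0:ℝ) (9/2)) := by
      intro x hx
      rw [Set.uIcc_of_le (by norm_num : (0:ℝ) ≤ 9/2), Set.mem_Icc] at hx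
      have hm : min x (9 - x) = x := min_eq_left (by linarith [hx.1, hx.2])
      simp only [hg_def, hm, List.map_cons, List.map_nil, List.sum_cons, List.sum_nil]
      ring
    have e2 : EqOn g (fun x => (([((6973568802:ℝ)/5, 6), (-1549681956, 7), (731794257, 8), (-191318760, 9), (30114990, 10), (-14407956/5, 11), (157464, 12), (-3888, 13), (1/15, 16)] : List (ℝ × ℕ)).map
        (fun ci => ci.1 * x ^ ci.2)).sum) (Set.uIcc ((9:ℝ)/2) 6) := by
      intro x hx
      rw [Set.uIcc_of_le (by norm_num : (9:ℝ)/2 ≤ 6), Set.mem_Icc] at hx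
      have hm : min x (9 - x) = 9 - x := min_eq_right (by linarith [hx.1, hx.2])
      simp only [hg_def, hm, List.map_cons, List.map_nil, List.sum_cons, List.sum_nil]
      ring
    rw [intervalIntegral.integral_congr e1, intervalIntegral.integral_congr e2,
      il_eval, il_eval]
    norm_num
  · intro x _
    have h : EqOn (fun y => (fun p : ℝ × ℝ => p.1 * (4 * p.1 ^ 5 * p.2 ^ 5 * (p.1 + p.2) ^ 2 * (p.1 - p.2) ^ 2)) (x, y))
        (fun y => (([(4 * x ^ 10, 5), (-8 * x ^ 8, 7), (4 * x ^ 6, 9)] : List (ℝ × ℕ)).map (fun ci => ci.1 * y ^ ci.2)).sum)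
        (Set.uIcc (0:ℝ) (min x (9 - x))) := by
      intro y _
      simp only [List.map_cons, List.map_nil, List.sum_cons, List.sum_nil]
      ring
    rw [intervalIntegral.integral_congr h, il_eval]
    simp only [hg_def, List.map_cons, List.map_nil, List.sum_cons, List.sum_nil]
    norm_num
    ring

lemma int_yP :
    ∫ p in S6, (p.2 * (4 * p.1 ^ 5 * p.2 ^ 5 * (p.1 + p.2) ^ 2 * (p.1 - p.2) ^ 2)) = (649862224757079507/69701632 : ℝ) := by
  have hmin : Continuous (fun x : ℝ => min x (9 - x)) :=
    continuous_id.min (continuous_const.sub continuous_id)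
  set g : ℝ → ℝ := fun x => 4 * x ^ 9 * (min x (9 - x)) ^ 7 / 7 - 8 * x ^ 7 * (min x (9 - x)) ^ 9 / 9 + 4 * x ^ 5 * (min x (9 - x)) ^ 11 / 11 with hg_def
  have hgc : Continuous g := by
    apply Continuous.add
    apply Continuous.sub
    all_goals fun_prop
  have hfc : Continuous (fun p : ℝ × ℝ => p.2 * (4 * p.1 ^ 5 * p.2 ^ 5 * (p.1 + p.2) ^ 2 * (p.1 - p.2) ^ 2)) := by fun_prop
  rw [setIntegral_S6 _ hfc g hgc ?_]
  · have e1 : EqOn g (fun x => (([((32:ℝ)/693, 16)] : List (ℝ × ℕ)).map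
        (fun ci => ci.1 * x ^ ci.2)).sum) (Set.uIcc (0:ℝ) (9/2)) := by
      intro x hx
      rw [Set.uIcc_of_le (by norm_num : (0:ℝ) ≤ 9/2), Set.mem_Icc] at hx
      have hm : min x (9 - x) = x := min_eq_left (by linarith [hx.1, hx.2])
      simp only [hg_def, hm, List.map_cons, List.map_nil, List.sum_cons, List.sum_nil]
      ring
    have e2 : EqOn g (fun x => (([((125524238436:ℝ)/11, 5), (-13947137604, 6), (7404036012, 7), (-2238429492, 8), (2965440780/7, 9), (-51726924, 10), (4015332, 11), (-183708, 12), (3888, 13), (-32/693, 16)] : List (ℝ × ℕ)).map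
        (fun ci => ci.1 * x ^ ci.2)).sum) (Set.uIcc ((9:ℝ)/2) 6) := by
      intro x hx
      rw [Set.uIcc_of_le (by norm_num : (9:ℝ)/2 ≤ 6), Set.mem_Icc] at hx
      have hm : min x (9 - x) = 9 - x := min_eq_right (by linarith [hx.1, hx.2])
      simp only [hg_def, hm, List.map_cons, List.map_nil, List.sum_cons, List.sum_nil]
      ring
    rw [intervalIntegral.integral_congr e1, intervalIntegral.integral_congr e2,
      il_eval, il_eval]
    norm_num
  · intro x _
    have h : EqOn (fun y => (fun p : ℝ × ℝ => p.2 * (4 * p.1 ^ 5 * p.2 ^ 5 * (p.1 + p.2) ^ 2 * (p.1 - p.2) ^ 2)) (x, y))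
        (fun y => (([(4 * x ^ 9, 6), (-8 * x ^ 7, 8), (4 * x ^ 5, 10)] : List (ℝ × ℕ)).map (fun ci => ci.1 * y ^ ci.2)).sum)
        (Set.uIcc (0:ℝ) (min x (9 - x))) := by
      intro y _
      simp only [List.map_cons, List.map_nil, List.sum_cons, List.sum_nil]
      ring
    rw [intervalIntegral.integral_congr h, il_eval]
    simp only [hg_def, List.map_cons, List.map_nil, List.sum_cons, List.sum_nil]
    norm_num
    ring

end

/-- The barycenter of the moment polytope `Δ₆` of `X₆` with respect to the
Duistermaat–Heckman measure is `(421619272419/78063549568, 226450079005/78063549568)`;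
in particular `x̄ > 5` and `x̄ + ȳ > 8`. -/
theorem barycenter_Delta6 :
    let Δ : Set (ℝ × ℝ) := convexHull ℝ
      {((0 : ℝ), (0 : ℝ)), (6, 0), (6, 3), (9 / 2, 9 / 2)}
    let P : ℝ × ℝ → ℝ := fun p =>
      4 * p.1 ^ 5 * p.2 ^ 5 * (p.1 + p.2) ^ 2 * (p.1 - p.2) ^ 2
    let xbar : ℝ := (∫ p in Δ, p.1 * P p) / (∫ p in Δ, P p)
    let ybar : ℝ := (∫ p in Δ, p.2 * P p) / (∫ p in Δ, P p)
    xbar = 421619272419 / 78063549568 ∧ ybar = 226450079005 / 78063549568 ∧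
      5 < xbar ∧ 8 < xbar + ybar := by
  intro Δ P xbar ybar
  have hΔ : Δ = S6 := convexHull_eq_S6
  have h0 : (∫ p in Δ, P p) = (514764068401251/160160 : ℝ) := by rw [hΔ]; exact int_P
  have h1 : (∫ p in Δ, p.1 * P p) = (6049775729347896033/348508160 : ℝ) := by
    rw [hΔ]; exact int_xP
  have h2 : (∫ p in Δ, p.2 * P p) = (649862224757079507/69701632 : ℝ) := by
    rw [hΔ]; exact int_yP
  have hx : xbar = 421619272419 / 78063549568 := by
    show (∫ p in Δ, p.1 * P p) / (∫ p in Δ, P p) = _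
    rw [h1, h0]; norm_num
  have hy : ybar = 226450079005 / 78063549568 := by
    show (∫ p in Δ, p.2 * P p) / (∫ p in Δ, P p) = _
    rw [h2, h0]; norm_num
  exact ⟨hx, hy, by rw [hx]; norm_num, by rw [hx, hy]; norm_num⟩
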